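/- Let d ≥ 1, s > 0 and 0 < q ≤ ∞. Then M(B^s_{∞,q}(ℝ^d)) = B^s_{∞,q}(ℝ^d) in the sense of equivalent quasi-norms: a function f is a pointwise multiplier of B^s_{∞,q}(ℝ^d) if and only if f ∈ B^s_{∞,q}(ℝ^d), and the multiplier quasi-norm is equivalent to ‖f | B^s_{∞,q}(ℝ^d)‖. -/

import Mathlib

open MeasureTheory ENNReal NNReal

noncomputable section

abbrev Euc (d : ℕ) := EuclideanSpace ℝ (Fin d)

def zpt {d : ℕ} (μ : Fin d → ℤ) : Euc d := WithLp.toLp 2 (fun i => (μ i : ℝ))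

/-- iterated difference `Δ_h^m f` -/
def fdiff {d : ℕ} (h : Euc d) (m : ℕ) (f : Euc d → ℂ) (x : Euc d) : ℂ :=
  ∑ ℓ ∈ Finset.range (m + 1), (-1 : ℂ) ^ (m - ℓ) * (m.choose ℓ : ℂ) * f (x + (ℓ : ℝ) • h)

/-- modulus of smoothness `ω_m(f,t)_p` -/
def omegaMod {d : ℕ} (m : ℕ) (p : ℝ≥0∞) (f : Euc d → ℂ) (t : ℝ) : ℝ≥0∞ :=
  ⨆ (h : Euc d) (_ : ‖h‖ < t), eLpNorm (fdiff h m f) p volume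

def lqNat (q : ℝ≥0∞) (a : ℕ → ℝ≥0∞) : ℝ≥0∞ :=
  if q = ∞ then ⨆ k, a k else (∑' k, a k ^ q.toReal) ^ (1 / q.toReal)

def lpZ {d : ℕ} (p : ℝ≥0∞) (a : (Fin d → ℤ) → ℝ≥0∞) : ℝ≥0∞ :=
  if p = ∞ then ⨆ μ, a μ else (∑' μ, a μ ^ p.toReal) ^ (1 / p.toReal)

/-- the Besov quasi-norm `‖f | B^s_{p,q}(ℝ^d)‖` defined via differences (with parameter `m > s`) -/
def besovNorm (d : ℕ) (s : ℝ) (p q : ℝ≥0∞) (m : ℕ) (f : Euc d → ℂ) : ℝ≥0∞ :=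
  eLpNorm f p volume +
    lqNat q fun k => (2 : ℝ≥0∞) ^ ((k : ℝ) * s) * omegaMod m p f ((2 : ℝ) ^ (-(k : ℝ)))

def MemBesov (d : ℕ) (s : ℝ) (p q : ℝ≥0∞) (m : ℕ) (f : Euc d → ℂ) : Prop :=
  AEStronglyMeasurable f volume ∧ besovNorm d s p q m f < ∞

/-- `f` is a pointwise multiplier of `B^s_{p,q}(ℝ^d)` -/
def MemMult (d : ℕ) (s : ℝ) (p q : ℝ≥0∞) (m : ℕ) (f : Euc d → ℂ) : Prop :=
  ∀ g, MemBesov d s p q m g → MemBesov d s p q m fun x => f x * g x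

def multNorm (d : ℕ) (s : ℝ) (p q : ℝ≥0∞) (m : ℕ) (f : Euc d → ℂ) : ℝ≥0∞ :=
  ⨆ (g : Euc d → ℂ) (_ : MemBesov d s p q m g ∧ besovNorm d s p q m g ≤ 1),
    besovNorm d s p q m fun x => f x * g x

def unifNorm (d : ℕ) (s : ℝ) (p q : ℝ≥0∞) (m : ℕ) (ψ : Euc d → ℝ) (f : Euc d → ℂ) : ℝ≥0∞ :=
  ⨆ lam : Euc d, besovNorm d s p q m fun x => f x * (ψ (x - lam) : ℂ)

def MemBesovUnif (d : ℕ) (s : ℝ) (p q : ℝ≥0∞) (m : ℕ) (ψ : Euc d → ℝ) (f : Euc d → ℂ) : Prop :=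
  AEStronglyMeasurable f volume ∧ unifNorm d s p q m ψ f < ∞

/-- `ψ_μ · f` -/
def psiMul {d : ℕ} (ψ : Euc d → ℝ) (μ : Fin d → ℤ) (f : Euc d → ℂ) : Euc d → ℂ :=
  fun x => (ψ (x - zpt μ) : ℂ) * f x

/-- the quasi-norm of the localized space `B^s_{p,q,v}(ℝ^d)` -/
def locNorm (d : ℕ) (s : ℝ) (p q v : ℝ≥0∞) (m : ℕ) (ψ : Euc d → ℝ) (f : Euc d → ℂ) : ℝ≥0∞ :=
  lpZ v fun μ => besovNorm d s p q m (psiMul ψ μ f)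

def MemBesovLoc (d : ℕ) (s : ℝ) (p q v : ℝ≥0∞) (m : ℕ) (ψ : Euc d → ℝ) (f : Euc d → ℂ) : Prop :=
  LocallyIntegrable f volume ∧ locNorm d s p q v m ψ f < ∞

/-- `(Σ_μ C_μ ψ_μ) · f` -/
def combo {d : ℕ} (ψ : Euc d → ℝ) (C : (Fin d → ℤ) → ℝ) (f : Euc d → ℂ) : Euc d → ℂ :=
  fun x => ((∑' μ : Fin d → ℤ, C μ * ψ (x - zpt μ) : ℝ) : ℂ) * f x

/-- the `ℓ_p(ℤ^d)` quasi-norm of a sequence of coefficients -/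
def lpZcoef {d : ℕ} (p : ℝ≥0∞) (C : (Fin d → ℤ) → ℝ) : ℝ≥0∞ :=
  lpZ p fun μ => (‖C μ‖₊ : ℝ≥0∞)

def lqCons (q : ℝ≥0∞) (x : ℝ≥0∞) (a : ℕ → ℝ≥0∞) : ℝ≥0∞ :=
  if q = ∞ then x ⊔ ⨆ k, a k
  else (x ^ q.toReal + ∑' k, a k ^ q.toReal) ^ (1 / q.toReal)

/-- the quasi-norm of the space `M^s_{p,q}(ℝ^d)` -/
def msNorm (d : ℕ) (s : ℝ) (p q : ℝ≥0∞) (m : ℕ) (ψ : Euc d → ℝ) (f : Euc d → ℂ) : ℝ≥0∞ :=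
  ⨆ (C : (Fin d → ℤ) → ℝ) (_ : lpZcoef p C ≤ 1),
    lqCons q (eLpNorm (combo ψ C f) p volume)
      (fun k => (2 : ℝ≥0∞) ^ ((k : ℝ) * s) *
        ⨆ (h : Euc d) (_ : ‖h‖ < (2 : ℝ) ^ (-(k : ℝ))),
          lpZ p fun μ => (‖C μ‖₊ : ℝ≥0∞) * eLpNorm (fdiff h m (psiMul ψ μ f)) p volume)

def MemMs (d : ℕ) (s : ℝ) (p q : ℝ≥0∞) (m : ℕ) (ψ : Euc d → ℝ) (f : Euc d → ℂ) : Prop :=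
  LocallyIntegrable f volume ∧ msNorm d s p q m ψ f < ∞

/-- membership in `B^s_{p,q}(Ω)` (functions on `ℝ^d` considered via their values on `Ω`) -/
def MemBesovOn (d : ℕ) (s : ℝ) (p q : ℝ≥0∞) (m : ℕ) (Ω : Set (Euc d)) (g : Euc d → ℂ) : Prop :=
  ∃ f, MemBesov d s p q m f ∧ Set.EqOn f g Ω

def besovNormOn (d : ℕ) (s : ℝ) (p q : ℝ≥0∞) (m : ℕ) (Ω : Set (Euc d)) (g : Euc d → ℂ) : ℝ≥0∞ :=
  ⨅ (f : Euc d → ℂ) (_ : MemBesov d s p q m f ∧ Set.EqOn f g Ω), besovNorm d s p q m f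

def multNormOn (d : ℕ) (s : ℝ) (p q : ℝ≥0∞) (m : ℕ) (Ω : Set (Euc d)) (f : Euc d → ℂ) : ℝ≥0∞ :=
  ⨆ (g : Euc d → ℂ) (_ : MemBesovOn d s p q m Ω g ∧ besovNormOn d s p q m Ω g ≤ 1),
    besovNormOn d s p q m Ω fun x => f x * g x

end


/-! ### Auxiliary development -/

section Aux

open Finset fwdDiff fwdDiff_aux Polynomial

variable {d : ℕ}

lemma fdiff_eq_fwdDiff (h : Euc d) (m : ℕ) (f : Euc d → ℂ) (x : Euc d) :
    fdiff h m f x = (fwdDiff h)^[m] f x := by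
  rw [fdiff, fwdDiff_iter_eq_sum_shift]
  refine Finset.sum_congr rfl fun ℓ _ => ?_
  rw [zsmul_eq_mul, Nat.cast_smul_eq_nsmul ℝ]
  push_cast
  ring

lemma aesm_translate {f : Euc d → ℂ} (hf : AEStronglyMeasurable f volume) (v : Euc d) :
    AEStronglyMeasurable (fun x => f (x + v)) volume :=
  hf.comp_quasiMeasurePreserving (measurePreserving_add_right volume v).quasiMeasurePreserving

lemma aesm_fwdDiff {f : Euc d → ℂ} (hf : AEStronglyMeasurable f volume) (h : Euc d) (m : ℕ) :
    AEStronglyMeasurable ((fwdDiff h)^[m] f) volume := by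
  have : (fwdDiff h)^[m] f = fun y => ∑ k ∈ range (m + 1),
      ((-1 : ℤ) ^ (m - k) * m.choose k) • f (y + k • h) := by
    ext y; exact fwdDiff_iter_eq_sum_shift h f m y
  rw [this]
  exact Finset.aestronglyMeasurable_fun_sum _ fun k _ =>
    ((aesm_translate hf ((k : ℕ) • h)).const_smul _)

lemma eLpNormTop_translate {f : Euc d → ℂ} (hf : AEStronglyMeasurable f volume) (v : Euc d) :
    eLpNorm (fun x => f (x + v)) ∞ volume = eLpNorm f ∞ volume :=
  eLpNorm_comp_measurePreserving hf (measurePreserving_add_right volume v)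

lemma eLpNormTop_mul_le (f g : Euc d → ℂ) :
    eLpNorm (fun x => f x * g x) ∞ volume ≤ eLpNorm f ∞ volume * eLpNorm g ∞ volume := by
  rw [eLpNorm_exponent_top, eLpNorm_exponent_top, eLpNorm_exponent_top]
  have h1 := enorm_ae_le_eLpNormEssSup f volume
  have h2 := enorm_ae_le_eLpNormEssSup g volume
  refine essSup_le_of_ae_le _ ?_
  filter_upwards [h1, h2] with x hx1 hx2
  calc ‖f x * g x‖ₑ = ‖f x‖ₑ * ‖g x‖ₑ := by
        rw [enorm_mul]
    _ ≤ _ := mul_le_mul' hx1 hx2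

lemma fwdDiff_succ_apply' (h : Euc d) (F : Euc d → ℂ) (n : ℕ) (y : Euc d) :
    (fwdDiff h)^[n+1] F y = (fwdDiff h)^[n] F (y + h) - (fwdDiff h)^[n] F y := by
  rw [Function.iterate_succ_apply']; rfl

lemma leibniz (h : Euc d) (f g : Euc d → ℂ) :
    ∀ (m : ℕ) (x : Euc d), (fwdDiff h)^[m] (fun y => f y * g y) x =
      ∑ j ∈ range (m+1), (m.choose j : ℂ) * ((fwdDiff h)^[j] f x) *
        ((fwdDiff h)^[m-j] g (x + j • h)) := by
  intro m
  induction m with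
  | zero => intro x; simp
  | succ m IH =>
    intro x
    have hsh : ∀ (y : Euc d) (j : ℕ), y + h + j • h = y + (j+1) • h := by
      intro y j; rw [succ_nsmul]; abel
    rw [fwdDiff_succ_apply', IH, IH]
    have e1 : ∀ j ∈ range (m+1),
        (m.choose j : ℂ) * ((fwdDiff h)^[j] f (x+h)) * ((fwdDiff h)^[m-j] g (x + h + j • h))
        = (m.choose j : ℂ) * ((fwdDiff h)^[j+1] f x) * ((fwdDiff h)^[m-j] g (x + (j+1) • h))
          + (m.choose j : ℂ) * ((fwdDiff h)^[j] f x) * ((fwdDiff h)^[m-j] g (x + (j+1) • h)) := by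
      intro j _
      have hf' : (fwdDiff h)^[j] f (x+h) = (fwdDiff h)^[j+1] f x + (fwdDiff h)^[j] f x := by
        rw [fwdDiff_succ_apply']; ring
      rw [hf', hsh x j]; ring
    rw [Finset.sum_congr rfl e1, Finset.sum_add_distrib]
    rw [add_sub_assoc, ← Finset.sum_sub_distrib]
    have e2 : ∀ j ∈ range (m+1),
        ((m.choose j : ℂ) * ((fwdDiff h)^[j] f x) * ((fwdDiff h)^[m-j] g (x + (j+1) • h))
          - (m.choose j : ℂ) * ((fwdDiff h)^[j] f x) * ((fwdDiff h)^[m-j] g (x + j • h)))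
        = (m.choose j : ℂ) * ((fwdDiff h)^[j] f x) * ((fwdDiff h)^[m+1-j] g (x + j • h)) := by
      intro j hj
      have hjm : j ≤ m := by simpa using Nat.lt_succ_iff.mp (mem_range.mp hj)
      have hmj : m + 1 - j = (m - j) + 1 := by omega
      have hsh2 : x + j • h + h = x + (j+1) • h := by rw [succ_nsmul]; abel
      rw [hmj, fwdDiff_succ_apply', hsh2]
      ring
    rw [Finset.sum_congr rfl e2]
    rw [Finset.sum_range_succ' (fun j => ((m+1).choose j : ℂ) * ((fwdDiff h)^[j] f x) *
      ((fwdDiff h)^[m+1-j] g (x + j • h))) (m+1)]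
    have e3 : ∀ j ∈ range (m+1),
        (((m+1).choose (j+1) : ℂ)) * ((fwdDiff h)^[j+1] f x) * ((fwdDiff h)^[m+1-(j+1)] g (x + (j+1) • h))
        = (m.choose j : ℂ) * ((fwdDiff h)^[j+1] f x) * ((fwdDiff h)^[m-j] g (x + (j+1) • h))
          + (m.choose (j+1) : ℂ) * ((fwdDiff h)^[j+1] f x) * ((fwdDiff h)^[m-j] g (x + (j+1) • h)) := by
      intro j _
      rw [Nat.succ_sub_succ_eq_sub, Nat.choose_succ_succ]
      push_cast; ring
    rw [Finset.sum_congr rfl e3, Finset.sum_add_distrib]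
    rw [Finset.sum_range_succ' (fun j => (m.choose j : ℂ) * ((fwdDiff h)^[j] f x) *
      ((fwdDiff h)^[m+1-j] g (x + j • h))) m]
    have e4 : ∑ j ∈ range m, (m.choose (j+1) : ℂ) * ((fwdDiff h)^[j+1] f x) *
          ((fwdDiff h)^[m+1-(j+1)] g (x + (j+1) • h))
        = ∑ j ∈ range (m+1), (m.choose (j+1) : ℂ) * ((fwdDiff h)^[j+1] f x) *
          ((fwdDiff h)^[m-j] g (x + (j+1) • h)) := by
      rw [Finset.sum_range_succ]
      simp [Nat.succ_sub_succ_eq_sub, Nat.choose_succ_self]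
    rw [e4]
    simp only [Nat.choose_zero_right, Nat.cast_one, one_mul, Function.iterate_zero, id_eq,
      zero_smul, add_zero, Nat.sub_zero]
    ring

lemma poly_marchaud (j : ℕ) :
    ((X : ℤ[X])^2 - 1)^j = 2^j * (X-1)^j +
      (∑ i ∈ range (j+1), (j.choose i : ℤ[X]) * (∑ r ∈ range i, X^r)) * (X-1)^(j+1) := by
  have h1 : ((X : ℤ[X])^2 - 1) = (X-1)*(X+1) := by ring
  have hbin : ((X : ℤ[X])+1)^j = ∑ i ∈ range (j+1), (j.choose i : ℤ[X]) * X^i := by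
    rw [add_pow]
    refine Finset.sum_congr rfl fun i _ => by ring
  have h2 : (2 : ℤ[X])^j = ∑ i ∈ range (j+1), (j.choose i : ℤ[X]) := by
    have h' : ((2^j : ℕ) : ℤ[X]) = ((∑ i ∈ range (j+1), j.choose i : ℕ) : ℤ[X]) :=
      congrArg _ (Nat.sum_range_choose j).symm
    push_cast at h'
    exact h'
  have h3 : ((X : ℤ[X])+1)^j = 2^j + ∑ i ∈ range (j+1), (j.choose i : ℤ[X]) * (X^i - 1) := by
    rw [hbin, h2, ← Finset.sum_add_distrib]
    refine Finset.sum_congr rfl fun i _ => by ring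
  have h4 : ∀ i : ℕ, ((X : ℤ[X])^i - 1) = (∑ r ∈ range i, X^r) * (X - 1) := fun i =>
    (geom_sum_mul X i).symm
  rw [h1, mul_pow, h3, mul_add]
  rw [Finset.mul_sum, Finset.sum_mul]
  have hterm : ∀ i ∈ range (j+1), (X - 1 : ℤ[X]) ^ j * ((j.choose i : ℤ[X]) * ((X : ℤ[X]) ^ i - 1))
      = ((j.choose i : ℤ[X]) * ∑ r ∈ range i, (X : ℤ[X]) ^ r) * ((X : ℤ[X]) - 1) ^ (j+1) := by
    intro i _
    rw [h4 i]
    ring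
  rw [Finset.sum_congr rfl hterm]
  ring

end Aux

section Aux2
open Finset fwdDiff fwdDiff_aux Polynomial

variable {d : ℕ}

def mcst (j : ℕ) : ℕ := ∑ i ∈ Finset.range (j+1), j.choose i * i

lemma marchaud_fun (h : Euc d) (f : Euc d → ℂ) (j : ℕ) (y : Euc d) :
    (fwdDiff (h+h))^[j] f y = (2^j : ℕ) • (fwdDiff h)^[j] f y +
      ∑ i ∈ range (j+1), (j.choose i : ℕ) •
        ∑ r ∈ range i, (fwdDiff h)^[j+1] f (y + r • h) := by
  have hid := congrArg (aeval (shiftₗ (Euc d) ℂ h)) (poly_marchaud j)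
  simp only [map_add, map_mul, map_pow, map_sub, map_one, map_sum, map_natCast, aeval_X,
    map_ofNat] at hid
  have hT1 : shiftₗ (Euc d) ℂ h - 1 = fwdDiffₗ (Euc d) ℂ h := by
    rw [shiftₗ]; exact add_sub_cancel_right _ 1
  have hT2 : shiftₗ (Euc d) ℂ h ^ 2 - 1 = fwdDiffₗ (Euc d) ℂ (h+h) := by
    have h22 : shiftₗ (Euc d) ℂ h ^ 2 = shiftₗ (Euc d) ℂ (h+h) := by
      refine LinearMap.ext fun F => funext fun z => ?_
      rw [shiftₗ_pow_apply, shiftₗ_apply, two_nsmul]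
    rw [h22, shiftₗ]; exact add_sub_cancel_right _ 1
  rw [hT1, hT2] at hid
  have happ := congrFun (LinearMap.congr_fun hid f) y
  have h2E : (2 : Module.End ℤ (Euc d → ℂ)) ^ j = ((2^j : ℕ) : Module.End ℤ (Euc d → ℂ)) := by
    push_cast; rfl
  rw [h2E] at happ
  simp only [LinearMap.add_apply, Module.End.mul_apply, LinearMap.sum_apply,
    Module.End.natCast_apply, Pi.add_apply, Pi.smul_apply, Finset.sum_apply,
    Module.End.pow_apply, coe_fwdDiffₗ] at happ
  rw [happ]
  congr 1
  refine Finset.sum_congr rfl fun i _ => ?_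
  congr 1
  refine Finset.sum_congr rfl fun r _ => ?_
  rw [← Module.End.pow_apply, shiftₗ_pow_apply]

lemma marchaud_norm (h : Euc d) {f : Euc d → ℂ} (hf : AEStronglyMeasurable f volume) (j : ℕ) :
    (2:ℝ≥0∞)^j * eLpNorm ((fwdDiff h)^[j] f) ∞ volume ≤
      eLpNorm ((fwdDiff (h+h))^[j] f) ∞ volume +
        (mcst j : ℝ≥0∞) * eLpNorm ((fwdDiff h)^[j+1] f) ∞ volume := by
  set D := (fwdDiff h)^[j+1] f with hD
  have hDm : AEStronglyMeasurable D volume := aesm_fwdDiff hf h (j+1)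
  have hRm : ∀ i : ℕ, AEStronglyMeasurable
      (fun y => ((j.choose i : ℕ) : ℂ) * ∑ r ∈ range i, D (y + r • h)) volume := by
    intro i
    apply AEStronglyMeasurable.const_mul
    exact Finset.aestronglyMeasurable_fun_sum _ fun r _ => aesm_translate hDm ((r : ℕ) • h)
  have hSm : AEStronglyMeasurable
      (fun y => ∑ i ∈ range (j+1), ((j.choose i : ℕ) : ℂ) * ∑ r ∈ range i, D (y + r • h)) volume := by
    exact Finset.aestronglyMeasurable_fun_sum _ fun i _ => hRm i
  have hkey : (fun y => ((2^j : ℕ) : ℂ) * (fwdDiff h)^[j] f y) =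
      fun y => (fwdDiff (h+h))^[j] f y -
        ∑ i ∈ range (j+1), ((j.choose i : ℕ) : ℂ) * ∑ r ∈ range i, D (y + r • h) := by
    funext y
    have := marchaud_fun h f j y
    simp only [nsmul_eq_mul] at this
    rw [this]
    push_cast
    ring
  have h1 : (2:ℝ≥0∞)^j * eLpNorm ((fwdDiff h)^[j] f) ∞ volume
      = eLpNorm (fun y => ((2^j : ℕ) : ℂ) * (fwdDiff h)^[j] f y) ∞ volume := by
    have heq : (fun y => ((2^j : ℕ) : ℂ) * (fwdDiff h)^[j] f y)
        = ((2^j : ℕ) : ℂ) • ((fwdDiff h)^[j] f) := rfl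
    rw [heq, eLpNorm_const_smul]
    congr 1
    simp
    rw [← ofReal_norm_eq_enorm, Complex.norm_two]; simp
  rw [h1, hkey]
  refine le_trans (eLpNorm_sub_le (aesm_fwdDiff hf (h+h) j) hSm le_top) ?_
  gcongr
  -- remaining : eLpNorm (Σ ...) ≤ mcst j * eLpNorm D
  have hsum : (fun y => ∑ i ∈ range (j+1), ((j.choose i : ℕ) : ℂ) * ∑ r ∈ range i, D (y + r • h))
      = ∑ i ∈ range (j+1), (fun y => ((j.choose i : ℕ) : ℂ) * ∑ r ∈ range i, D (y + r • h)) := by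
    funext y; simp
  rw [hsum]
  refine le_trans (eLpNorm_sum_le (fun i _ => hRm i) le_top) ?_
  have hterm : ∀ i ∈ range (j+1),
      eLpNorm (fun y => ((j.choose i : ℕ) : ℂ) * ∑ r ∈ range i, D (y + r • h)) ∞ volume
        ≤ (j.choose i : ℝ≥0∞) * (i * eLpNorm D ∞ volume) := by
    intro i _
    have heq : (fun y => ((j.choose i : ℕ) : ℂ) * ∑ r ∈ range i, D (y + r • h))
        = ((j.choose i : ℕ) : ℂ) • (fun y => ∑ r ∈ range i, D (y + r • h)) := rfl
    rw [heq, eLpNorm_const_smul]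
    have hc : ‖((j.choose i : ℕ) : ℂ)‖ₑ = (j.choose i : ℝ≥0∞) := by
      rw [← ofReal_norm_eq_enorm, Complex.norm_natCast, ENNReal.ofReal_natCast]
    rw [hc]
    gcongr
    have hin : (fun y => ∑ r ∈ range i, D (y + r • h))
        = ∑ r ∈ range i, (fun y => D (y + r • h)) := by
      funext y; simp
    rw [hin]
    refine le_trans (eLpNorm_sum_le (fun r _ => aesm_translate hDm _) le_top) ?_
    calc ∑ r ∈ range i, eLpNorm (fun y => D (y + r • h)) ∞ volume
        = ∑ r ∈ range i, eLpNorm D ∞ volume := by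
          refine Finset.sum_congr rfl fun r _ => eLpNormTop_translate hDm _
      _ = (i : ℝ≥0∞) * eLpNorm D ∞ volume := by
          rw [Finset.sum_const, card_range, nsmul_eq_mul]
      _ ≤ (i : ℝ≥0∞) * eLpNorm D ∞ volume := le_rfl
  refine le_trans (Finset.sum_le_sum hterm) ?_
  rw [mcst]
  push_cast
  rw [Finset.sum_mul]
  refine le_of_eq (Finset.sum_congr rfl fun i _ => by ring)

end Aux2

section Aux3
open Finset fwdDiff

variable {d : ℕ}

lemma fdiff_fun_eq (h : Euc d) (m : ℕ) (f : Euc d → ℂ) :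
    fdiff h m f = (fwdDiff h)^[m] f := funext (fdiff_eq_fwdDiff h m f)

lemma eLpNormTop_fwdDiff_le (h : Euc d) {f : Euc d → ℂ} (hf : AEStronglyMeasurable f volume)
    (m : ℕ) : eLpNorm ((fwdDiff h)^[m] f) ∞ volume ≤ 2^m * eLpNorm f ∞ volume := by
  have hrep : (fwdDiff h)^[m] f = ∑ k ∈ range (m + 1),
      (fun y => (((-1 : ℤ) ^ (m - k) * m.choose k : ℤ) : ℂ) * f (y + k • h)) := by
    funext y
    rw [fwdDiff_iter_eq_sum_shift]
    simp only [Finset.sum_apply]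
    refine Finset.sum_congr rfl fun k _ => ?_
    rw [zsmul_eq_mul]
  rw [hrep]
  refine le_trans (eLpNorm_sum_le (fun k _ => ((aesm_translate hf _).const_mul _)) le_top) ?_
  have hterm : ∀ k ∈ range (m+1),
      eLpNorm (fun y => (((-1 : ℤ) ^ (m - k) * m.choose k : ℤ) : ℂ) * f (y + k • h)) ∞ volume
        ≤ (m.choose k : ℝ≥0∞) * eLpNorm f ∞ volume := by
    intro k _
    have heq : (fun y => (((-1 : ℤ) ^ (m - k) * m.choose k : ℤ) : ℂ) * f (y + k • h))
        = (((-1 : ℤ) ^ (m - k) * m.choose k : ℤ) : ℂ) • (fun y => f (y + k • h)) := rfl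
    rw [heq, eLpNorm_const_smul, eLpNormTop_translate hf]
    have hcn : ‖(((-1 : ℤ) ^ (m - k) * m.choose k : ℤ) : ℂ)‖ₑ = (m.choose k : ℝ≥0∞) := by
      push_cast
      rw [enorm_mul, enorm_pow]
      simp
      rw [← ofReal_norm_eq_enorm, Complex.norm_natCast, ENNReal.ofReal_natCast]
    rw [hcn]
  refine le_trans (Finset.sum_le_sum hterm) ?_
  rw [← Finset.sum_mul]
  gcongr
  have := Nat.sum_range_choose m
  have hc : (∑ k ∈ range (m+1), (m.choose k : ℝ≥0∞)) = ((2^m : ℕ) : ℝ≥0∞) := by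
    rw [← Nat.cast_sum, this]
  rw [hc]
  push_cast
  exact le_rfl

lemma omega_le {f : Euc d → ℂ} {m : ℕ} {p : ℝ≥0∞} {t : ℝ} {A : ℝ≥0∞}
    (H : ∀ h : Euc d, ‖h‖ < t → eLpNorm (fdiff h m f) p volume ≤ A) :
    omegaMod m p f t ≤ A := iSup₂_le H

lemma le_omega {f : Euc d → ℂ} {m : ℕ} {p : ℝ≥0∞} {t : ℝ} {h : Euc d} (hht : ‖h‖ < t) :
    eLpNorm (fdiff h m f) p volume ≤ omegaMod m p f t :=
  le_iSup₂ (f := fun (h : Euc d) (_ : ‖h‖ < t) => eLpNorm (fdiff h m f) p volume) h hht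

lemma omega_mono (f : Euc d → ℂ) (m : ℕ) (p : ℝ≥0∞) {t t' : ℝ} (htt : t ≤ t') :
    omegaMod m p f t ≤ omegaMod m p f t' :=
  omega_le fun h hh => le_omega (lt_of_lt_of_le hh htt)

lemma omega_le_pow {f : Euc d → ℂ} (hf : AEStronglyMeasurable f volume) (m : ℕ) (t : ℝ) :
    omegaMod m ∞ f t ≤ 2^m * eLpNorm f ∞ volume :=
  omega_le fun h _ => by rw [fdiff_fun_eq]; exact eLpNormTop_fwdDiff_le h hf m

lemma omega_zero_order (f : Euc d → ℂ) {t : ℝ} (ht : 0 < t) :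
    omegaMod 0 ∞ f t = eLpNorm f ∞ volume := by
  refine le_antisymm (omega_le fun h _ => ?_) ?_
  · rw [fdiff_fun_eq]
    simp
  · have h0 : ‖(0 : Euc d)‖ < t := by simpa using ht
    refine le_trans (le_of_eq ?_) (le_omega (h := 0) h0)
    rw [fdiff_fun_eq]
    simp

lemma omega_marchaud {f : Euc d → ℂ} (hf : AEStronglyMeasurable f volume) (j : ℕ) {t : ℝ} :
    (2:ℝ≥0∞)^j * omegaMod j ∞ f t ≤
      omegaMod j ∞ f (2*t) + (mcst j : ℝ≥0∞) * omegaMod (j+1) ∞ f t := by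
  rw [omegaMod]
  simp_rw [ENNReal.mul_iSup]
  refine iSup₂_le fun h hht => ?_
  have h2h : ‖h + h‖ < 2 * t := by
    calc ‖h + h‖ ≤ ‖h‖ + ‖h‖ := norm_add_le h h
    _ < 2 * t := by linarith
  calc (2:ℝ≥0∞)^j * eLpNorm (fdiff h j f) ∞ volume
      ≤ eLpNorm ((fwdDiff (h+h))^[j] f) ∞ volume
          + (mcst j : ℝ≥0∞) * eLpNorm ((fwdDiff h)^[j+1] f) ∞ volume := by
        rw [fdiff_fun_eq]; exact marchaud_norm h hf j
    _ ≤ omegaMod j ∞ f (2*t) + (mcst j : ℝ≥0∞) * omegaMod (j+1) ∞ f t := by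
        gcongr
        · rw [← fdiff_fun_eq]; exact le_omega h2h
        · rw [← fdiff_fun_eq]; exact le_omega hht

lemma omega_leibniz {f g : Euc d → ℂ} (hf : AEStronglyMeasurable f volume)
    (hg : AEStronglyMeasurable g volume) (m : ℕ) (t : ℝ) :
    omegaMod m ∞ (fun x => f x * g x) t ≤
      ∑ j ∈ range (m+1), (m.choose j : ℝ≥0∞) * (omegaMod j ∞ f t * omegaMod (m-j) ∞ g t) := by
  refine omega_le fun h hht => ?_
  rw [fdiff_fun_eq]
  have hrep : (fwdDiff h)^[m] (fun y => f y * g y) = ∑ j ∈ range (m+1),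
      (fun x => (m.choose j : ℂ) * ((fwdDiff h)^[j] f x * (fwdDiff h)^[m-j] g (x + j • h))) := by
    funext x
    rw [leibniz h f g m x]
    simp only [Finset.sum_apply]
    exact Finset.sum_congr rfl fun j _ => by ring
  rw [hrep]
  have haesm : ∀ j, AEStronglyMeasurable
      (fun x => (m.choose j : ℂ) * ((fwdDiff h)^[j] f x * (fwdDiff h)^[m-j] g (x + j • h)))
      volume := by
    intro j
    exact (((aesm_fwdDiff hf h j).mul ((aesm_fwdDiff hg h (m-j)).comp_quasiMeasurePreserving
      (measurePreserving_add_right volume (j • h)).quasiMeasurePreserving)).const_mul _)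
  refine le_trans (eLpNorm_sum_le (fun j _ => haesm j) le_top) ?_
  refine Finset.sum_le_sum fun j _ => ?_
  have heq : (fun x => (m.choose j : ℂ) * ((fwdDiff h)^[j] f x * (fwdDiff h)^[m-j] g (x + j • h)))
      = (m.choose j : ℂ) • (fun x => (fwdDiff h)^[j] f x * (fwdDiff h)^[m-j] g (x + j • h)) := rfl
  rw [heq, eLpNorm_const_smul]
  have hcn : ‖((m.choose j : ℕ) : ℂ)‖ₑ = (m.choose j : ℝ≥0∞) := by
    rw [← ofReal_norm_eq_enorm, Complex.norm_natCast, ENNReal.ofReal_natCast]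
  rw [hcn]
  gcongr
  calc eLpNorm (fun x => (fwdDiff h)^[j] f x * (fwdDiff h)^[m-j] g (x + j • h)) ∞ volume
      ≤ eLpNorm ((fwdDiff h)^[j] f) ∞ volume *
          eLpNorm (fun x => (fwdDiff h)^[m-j] g (x + j • h)) ∞ volume :=
        eLpNormTop_mul_le _ _
    _ = eLpNorm ((fwdDiff h)^[j] f) ∞ volume * eLpNorm ((fwdDiff h)^[m-j] g) ∞ volume := by
        rw [eLpNormTop_translate (aesm_fwdDiff hg h (m-j))]
    _ ≤ omegaMod j ∞ f t * omegaMod (m-j) ∞ g t := by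
        gcongr
        · rw [← fdiff_fun_eq]; exact le_omega hht
        · rw [← fdiff_fun_eq]; exact le_omega hht

end Aux3

section Aux4
open Finset

lemma lqNat_mono (q : ℝ≥0∞) {a b : ℕ → ℝ≥0∞} (hab : ∀ k, a k ≤ b k) :
    lqNat q a ≤ lqNat q b := by
  rw [lqNat, lqNat]
  split_ifs with hq
  · exact iSup_mono hab
  · exact ENNReal.rpow_le_rpow (ENNReal.tsum_le_tsum fun k =>
      ENNReal.rpow_le_rpow (hab k) ENNReal.toReal_nonneg) (by positivity)

lemma le_lqNat {q : ℝ≥0∞} (hq : q ≠ 0) (a : ℕ → ℝ≥0∞) (k : ℕ) : a k ≤ lqNat q a := by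
  rw [lqNat]
  split_ifs with hqi
  · exact le_iSup a k
  · have ht : 0 < q.toReal := ENNReal.toReal_pos hq hqi
    calc a k = (a k ^ q.toReal) ^ (1/q.toReal) := by
          rw [← ENNReal.rpow_mul, mul_one_div, div_self ht.ne', ENNReal.rpow_one]
      _ ≤ _ := ENNReal.rpow_le_rpow (ENNReal.le_tsum k) (by positivity)

lemma lqNat_const_mul {q : ℝ≥0∞} (hq : q ≠ 0) (c : ℝ≥0∞) (a : ℕ → ℝ≥0∞) :
    lqNat q (fun k => c * a k) = c * lqNat q a := by
  rw [lqNat, lqNat]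
  split_ifs with hqi
  · exact (ENNReal.mul_iSup c a).symm
  · have ht : 0 < q.toReal := ENNReal.toReal_pos hq hqi
    have h1 : ∀ k, (c * a k) ^ q.toReal = c ^ q.toReal * a k ^ q.toReal := fun k =>
      ENNReal.mul_rpow_of_nonneg _ _ ENNReal.toReal_nonneg
    simp_rw [h1]
    rw [ENNReal.tsum_mul_left, ENNReal.mul_rpow_of_nonneg _ _ (by positivity : (0:ℝ) ≤ 1/q.toReal),
      ← ENNReal.rpow_mul, mul_one_div, div_self ht.ne', ENNReal.rpow_one]

lemma lqNat_zero (q : ℝ≥0∞) (hq : q ≠ 0) : lqNat q (fun _ => 0) = 0 := by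
  rw [lqNat]
  split_ifs with hqi
  · simp
  · have ht : 0 < q.toReal := ENNReal.toReal_pos hq hqi
    have h0 : (∑' (_ : ℕ), (0:ℝ≥0∞) ^ q.toReal) = 0 := by
      simp [ENNReal.zero_rpow_of_pos ht]
    rw [h0]
    exact ENNReal.zero_rpow_of_pos (one_div_pos.mpr ht)

noncomputable def KqC (q : ℝ≥0∞) : ℝ≥0∞ := 2 * (2:ℝ≥0∞) ^ (1/q.toReal)

lemma KqC_ne_top (q : ℝ≥0∞) : KqC q ≠ ∞ := by
  rw [KqC]
  exact ENNReal.mul_ne_top (by norm_num)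
    (ENNReal.rpow_ne_top_of_nonneg (by positivity) (by norm_num))

lemma one_le_KqC (q : ℝ≥0∞) : 1 ≤ KqC q := by
  rw [KqC]
  have h1 : (1:ℝ≥0∞) ≤ 2 ^ (1/q.toReal) := by
    have := ENNReal.rpow_le_rpow_of_exponent_le (x := 2) (y := 0) (z := 1/q.toReal)
      one_le_two (by positivity)
    rwa [ENNReal.rpow_zero] at this
  calc (1:ℝ≥0∞) = 1 * 1 := (one_mul 1).symm
    _ ≤ 2 * 2 ^ (1/q.toReal) := mul_le_mul' one_le_two h1

lemma rpow_add_le' (x y : ℝ≥0∞) {e : ℝ} (he : 0 ≤ e) :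
    (x + y) ^ e ≤ 2 ^ e * (x ^ e + y ^ e) := by
  have h1 : x + y ≤ 2 * (x ⊔ y) := by
    rw [two_mul]
    exact add_le_add le_sup_left le_sup_right
  calc (x + y) ^ e ≤ (2 * (x ⊔ y)) ^ e := ENNReal.rpow_le_rpow h1 he
    _ = 2 ^ e * (x ⊔ y) ^ e := ENNReal.mul_rpow_of_nonneg _ _ he
    _ ≤ 2 ^ e * (x ^ e + y ^ e) := by
        gcongr
        rcases le_total x y with hxy | hxy
        · rw [sup_eq_right.mpr hxy]; exact le_add_self
        · rw [sup_eq_left.mpr hxy]; exact le_add_right le_rfl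

lemma lqNat_add_le {q : ℝ≥0∞} (hq : q ≠ 0) (a b : ℕ → ℝ≥0∞) :
    lqNat q (fun k => a k + b k) ≤ KqC q * (lqNat q a + lqNat q b) := by
  rw [lqNat, lqNat, lqNat]
  split_ifs with hqi
  · refine iSup_le fun k => ?_
    calc a k + b k ≤ (⨆ k, a k) + ⨆ k, b k := add_le_add (le_iSup a k) (le_iSup b k)
      _ ≤ KqC q * ((⨆ k, a k) + ⨆ k, b k) := le_mul_of_one_le_left zero_le' (one_le_KqC q)
  · have ht : 0 < q.toReal := ENNReal.toReal_pos hq hqi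
    set t := q.toReal
    have step1 : ∑' k, (a k + b k) ^ t ≤ 2 ^ t * ((∑' k, a k ^ t) + ∑' k, b k ^ t) := by
      calc ∑' k, (a k + b k) ^ t ≤ ∑' k, 2 ^ t * (a k ^ t + b k ^ t) :=
            ENNReal.tsum_le_tsum fun k => rpow_add_le' _ _ ht.le
        _ = 2 ^ t * ((∑' k, a k ^ t) + ∑' k, b k ^ t) := by
            rw [ENNReal.tsum_mul_left, ENNReal.tsum_add]
    calc (∑' k, (a k + b k) ^ t) ^ (1/t)
        ≤ (2 ^ t * ((∑' k, a k ^ t) + ∑' k, b k ^ t)) ^ (1/t) :=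
          ENNReal.rpow_le_rpow step1 (by positivity)
      _ = 2 * ((∑' k, a k ^ t) + ∑' k, b k ^ t) ^ (1/t) := by
          rw [ENNReal.mul_rpow_of_nonneg _ _ (by positivity : (0:ℝ) ≤ 1/t),
            ← ENNReal.rpow_mul, mul_one_div, div_self ht.ne', ENNReal.rpow_one]
      _ ≤ 2 * (2 ^ (1/t) * ((∑' k, a k ^ t) ^ (1/t) + (∑' k, b k ^ t) ^ (1/t))) := by
          gcongr
          exact rpow_add_le' _ _ (by positivity)
      _ = KqC q * ((∑' k, a k ^ t) ^ (1/t) + (∑' k, b k ^ t) ^ (1/t)) := by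
          rw [KqC, mul_assoc]

lemma lqNat_sum_le {q : ℝ≥0∞} (hq : q ≠ 0) (n : ℕ) (F : ℕ → ℕ → ℝ≥0∞) :
    lqNat q (fun k => ∑ j ∈ range n, F j k) ≤ (KqC q)^n * ∑ j ∈ range n, lqNat q (F j) := by
  induction n with
  | zero => simp [lqNat_zero q hq]
  | succ n IH =>
    have hstep : lqNat q (fun k => ∑ j ∈ range (n+1), F j k)
        ≤ KqC q * (lqNat q (fun k => ∑ j ∈ range n, F j k) + lqNat q (F n)) := by
      have : (fun k => ∑ j ∈ range (n+1), F j k)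
          = fun k => (∑ j ∈ range n, F j k) + F n k := by
        funext k; rw [Finset.sum_range_succ]
      rw [this]
      exact lqNat_add_le hq _ _
    refine le_trans hstep ?_
    calc KqC q * (lqNat q (fun k => ∑ j ∈ range n, F j k) + lqNat q (F n))
        ≤ KqC q * ((KqC q)^n * ∑ j ∈ range n, lqNat q (F j) + lqNat q (F n)) := by gcongr
      _ ≤ KqC q * ((KqC q)^n * ∑ j ∈ range n, lqNat q (F j) + (KqC q)^n * lqNat q (F n)) := by
          gcongr
          exact le_mul_of_one_le_left zero_le' (one_le_pow_of_one_le' (one_le_KqC q) n)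
      _ = (KqC q)^(n+1) * ∑ j ∈ range (n+1), lqNat q (F j) := by
          rw [Finset.sum_range_succ, mul_add, mul_add, pow_succ]
          ring

lemma tsum_conv_le (u v : ℕ → ℝ≥0∞) :
    ∑' k, ∑ i ∈ range k, u i * v (k - i) ≤ (∑' n, u n) * ∑' n, v n := by
  have h1 : ∀ k, ∑ i ∈ range k, u i * v (k-i)
      = ∑' i, (if i < k then u i * v (k-i) else 0) := by
    intro k
    rw [tsum_eq_sum (s := range k) (fun b hb => if_neg (by simpa using hb))]
    exact (Finset.sum_congr rfl fun i hi => (if_pos (mem_range.mp hi)).symm)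
  simp_rw [h1]
  rw [ENNReal.tsum_comm]
  have h2 : ∀ i, ∑' k, (if i < k then u i * v (k-i) else 0) ≤ u i * ∑' n, v n := by
    intro i
    have hsplit : ∀ k : ℕ, (if i < k then u i * v (k-i) else 0)
        = u i * (if i < k then v (k-i) else 0) := by
      intro k
      rw [mul_ite, mul_zero]
    simp_rw [hsplit]
    rw [ENNReal.tsum_mul_left]
    refine mul_le_mul_right ?_ (u i)
    rw [ENNReal.tsum_eq_iSup_sum]
    refine iSup_le fun s => ?_
    rw [← Finset.sum_filter]
    have hinj : Set.InjOn (fun k => k - i) (s.filter (fun k => i < k)) := by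
      intro x hx y hy hxy
      simp only [Finset.coe_filter, Set.mem_setOf_eq] at hx hy
      simp only at hxy
      omega
    rw [← Finset.sum_image (f := v) (g := fun k => k - i) (fun x hx y hy hxy => hinj hx hy hxy)]
    exact ENNReal.sum_le_tsum _
  calc ∑' i, ∑' k, (if i < k then u i * v (k-i) else 0)
      ≤ ∑' i, u i * ∑' n, v n := ENNReal.tsum_le_tsum h2
    _ = (∑' n, u n) * ∑' n, v n := ENNReal.tsum_mul_right

lemma rpow_sum_le_sum_rpow (s : Finset ℕ) (f : ℕ → ℝ≥0∞) {t : ℝ} (ht : 0 < t) (ht1 : t ≤ 1) :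
    (∑ i ∈ s, f i) ^ t ≤ ∑ i ∈ s, (f i) ^ t := by
  induction s using Finset.induction with
  | empty => simp [ENNReal.zero_rpow_of_pos ht]
  | insert a s' hnotmem IH =>
    rw [Finset.sum_insert hnotmem, Finset.sum_insert hnotmem]
    calc (f a + ∑ i ∈ s', f i) ^ t ≤ (f a) ^ t + (∑ i ∈ s', f i) ^ t :=
          ENNReal.rpow_add_le_add_rpow _ _ ht.le ht1
      _ ≤ (f a) ^ t + ∑ i ∈ s', (f i) ^ t := by gcongr

end Aux4

section Aux5
open Finset

lemma one_sub_ne_zero_of_lt_one {θ : ℝ≥0∞} (hθ1 : θ < 1) : (1:ℝ≥0∞) - θ ≠ 0 := by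
  simp only [ne_eq, tsub_eq_zero_iff_le, not_le]
  exact hθ1

lemma geom_pow_rpow {θ : ℝ≥0∞} (t : ℝ) (k : ℕ) : (θ^k)^t = (θ^t)^k := by
  rw [← ENNReal.rpow_natCast θ k, ← ENNReal.rpow_mul, mul_comm, ENNReal.rpow_mul,
    ENNReal.rpow_natCast]

lemma lqNat_geom_le (q θ : ℝ≥0∞) (hq : q ≠ 0) (hθ1 : θ < 1) :
    ∃ G : ℝ≥0∞, G ≠ ∞ ∧ lqNat q (fun k => θ^k) ≤ G := by
  by_cases hqi : q = ∞
  · refine ⟨1, one_ne_top, ?_⟩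
    subst hqi
    rw [lqNat, if_pos rfl]
    exact iSup_le fun k => pow_le_one' hθ1.le k
  · have ht : 0 < q.toReal := ENNReal.toReal_pos hq hqi
    refine ⟨((1 - θ^q.toReal)⁻¹)^(1/q.toReal), ?_, ?_⟩
    · have hlt : θ^q.toReal < 1 := ENNReal.rpow_lt_one hθ1 ht
      exact ENNReal.rpow_ne_top_of_nonneg (by positivity)
        (ENNReal.inv_ne_top.mpr (one_sub_ne_zero_of_lt_one hlt))
    · rw [lqNat, if_neg hqi]
      simp_rw [geom_pow_rpow q.toReal]
      rw [ENNReal.tsum_geometric]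

lemma lqNat_conv_le (q θ : ℝ≥0∞) (hq : q ≠ 0) (hθ1 : θ < 1) :
    ∃ Cv : ℝ≥0∞, Cv ≠ ∞ ∧ ∀ B : ℕ → ℝ≥0∞,
      lqNat q (fun k => ∑ i ∈ Finset.range k, θ^i * B (k-i)) ≤ Cv * lqNat q B := by
  have hθt : θ ≠ ∞ := (hθ1.trans_le le_top).ne
  by_cases hqi : q = ∞
  · refine ⟨(1-θ)⁻¹, ENNReal.inv_ne_top.mpr (one_sub_ne_zero_of_lt_one hθ1), fun B => ?_⟩
    subst hqi
    rw [lqNat, if_pos rfl, lqNat, if_pos rfl]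
    refine iSup_le fun k => ?_
    calc ∑ i ∈ range k, θ^i * B (k-i) ≤ ∑ i ∈ range k, θ^i * ⨆ n, B n := by
          gcongr with i hi
          exact le_iSup B (k-i)
      _ = (∑ i ∈ range k, θ^i) * ⨆ n, B n := by rw [← Finset.sum_mul]
      _ ≤ (∑' i, θ^i) * ⨆ n, B n := by
          gcongr
          exact ENNReal.sum_le_tsum _
      _ = (1-θ)⁻¹ * ⨆ n, B n := by rw [ENNReal.tsum_geometric]
  · have ht : 0 < q.toReal := ENNReal.toReal_pos hq hqi
    set t := q.toReal with hth
    by_cases ht1 : 1 ≤ t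
    · -- case t ≥ 1 : use weighted power mean inequality
      set S := (1-θ)⁻¹ with hSdef
      have hS0 : S ≠ 0 := by
        rw [hSdef]
        exact ENNReal.inv_ne_zero.mpr (ne_top_of_le_ne_top one_ne_top tsub_le_self)
      have hSt : S ≠ ∞ := ENNReal.inv_ne_top.mpr (one_sub_ne_zero_of_lt_one hθ1)
      refine ⟨S, hSt, fun B => ?_⟩
      have key : ∀ k, (∑ i ∈ range k, θ^i * B (k-i))^t
          ≤ S^(t-1) * ∑ i ∈ range k, θ^i * (B (k-i))^t := by
        intro k
        rcases Nat.eq_zero_or_pos k with rfl | hk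
        · simp [ENNReal.zero_rpow_of_pos ht]
        · set W := ∑ i ∈ range k, θ^i with hWdef
          have hW1 : 1 ≤ W := by
            have := Finset.single_le_sum (f := fun i => θ^i)
              (fun i _ => zero_le') (mem_range.mpr hk)
            simpa using this
          have hW0 : W ≠ 0 := fun h => by simp [h] at hW1
          have hWt : W ≠ ∞ := by
            rw [hWdef]
            exact (ENNReal.sum_lt_top.mpr fun i _ =>
              (ENNReal.pow_ne_top hθt).lt_top).ne
          have hw' : ∑ i ∈ range k, θ^i / W = 1 := by
            simp_rw [div_eq_mul_inv]
            rw [← Finset.sum_mul, ← hWdef, ← div_eq_mul_inv, ENNReal.div_self hW0 hWt]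
          have hmean := ENNReal.rpow_arith_mean_le_arith_mean_rpow (range k)
            (fun i => θ^i / W) (fun i => B (k-i)) hw' ht1
          have hrw : ∑ i ∈ range k, θ^i * B (k-i) = (∑ i ∈ range k, (θ^i / W) * B (k-i)) * W := by
            rw [Finset.sum_mul]
            refine Finset.sum_congr rfl fun i _ => ?_
            rw [mul_right_comm, ENNReal.div_mul_cancel hW0 hWt]
          have hrw2 : ∑ i ∈ range k, (θ^i / W) * (B (k-i))^t
              = (∑ i ∈ range k, θ^i * (B (k-i))^t) * W⁻¹ := by
            rw [Finset.sum_mul]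
            refine Finset.sum_congr rfl fun i _ => ?_
            rw [div_eq_mul_inv, mul_right_comm]
          calc (∑ i ∈ range k, θ^i * B (k-i))^t
              = ((∑ i ∈ range k, (θ^i / W) * B (k-i)) * W)^t := by rw [hrw]
            _ = (∑ i ∈ range k, (θ^i / W) * B (k-i))^t * W^t :=
                ENNReal.mul_rpow_of_nonneg _ _ (by positivity)
            _ ≤ (∑ i ∈ range k, (θ^i / W) * (B (k-i))^t) * W^t :=
                mul_le_mul_left hmean _
            _ = (∑ i ∈ range k, θ^i * (B (k-i))^t) * (W⁻¹ * W^t) := by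
                rw [hrw2]; ring
            _ = (∑ i ∈ range k, θ^i * (B (k-i))^t) * W^(t-1) := by
                congr 1
                have hWpow : W^t = W^(t-1) * W := by
                  have h1 : W^t = W^((t-1)+1) := by norm_num
                  rw [h1, ENNReal.rpow_add _ _ hW0 hWt, ENNReal.rpow_one]
                rw [hWpow, mul_comm (W^(t-1)) W, ← mul_assoc,
                  ENNReal.inv_mul_cancel hW0 hWt, one_mul]
            _ ≤ (∑ i ∈ range k, θ^i * (B (k-i))^t) * S^(t-1) := by
                have hWS : W ≤ S := (ENNReal.sum_le_tsum _).trans_eq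
                  (ENNReal.tsum_geometric θ)
                exact mul_le_mul_right (ENNReal.rpow_le_rpow hWS (by linarith)) _
            _ = S^(t-1) * ∑ i ∈ range k, θ^i * (B (k-i))^t := mul_comm _ _
      rw [lqNat, if_neg hqi, lqNat, if_neg hqi]
      calc (∑' k, (∑ i ∈ range k, θ^i * B (k-i))^t)^(1/t)
          ≤ (∑' k, S^(t-1) * ∑ i ∈ range k, θ^i * (B (k-i))^t)^(1/t) :=
            ENNReal.rpow_le_rpow (ENNReal.tsum_le_tsum key) (by positivity)
        _ = (S^(t-1) * ∑' k, ∑ i ∈ range k, θ^i * (B (k-i))^t)^(1/t) := by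
            rw [ENNReal.tsum_mul_left]
        _ ≤ (S^(t-1) * ((∑' n, θ^n) * ∑' n, (B n)^t))^(1/t) := by
            gcongr
            exact tsum_conv_le (fun n => θ^n) (fun n => (B n)^t)
        _ = (S^t * ∑' n, (B n)^t)^(1/t) := by
            rw [ENNReal.tsum_geometric, ← hSdef]
            congr 1
            rw [← mul_assoc]
            congr 1
            have : S^t = S^((t-1)+1) := by norm_num
            rw [this, ENNReal.rpow_add _ _ hS0 hSt, ENNReal.rpow_one]
        _ = S * (∑' n, (B n)^t)^(1/t) := by
            rw [ENNReal.mul_rpow_of_nonneg _ _ (by positivity), ← ENNReal.rpow_mul,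
              mul_one_div, div_self ht.ne', ENNReal.rpow_one]
    · push_neg at ht1
      have hlt : θ^t < 1 := ENNReal.rpow_lt_one hθ1 ht
      refine ⟨((1 - θ^t)⁻¹)^(1/t), ENNReal.rpow_ne_top_of_nonneg (by positivity)
        (ENNReal.inv_ne_top.mpr (one_sub_ne_zero_of_lt_one hlt)), fun B => ?_⟩
      have key : ∀ k, (∑ i ∈ range k, θ^i * B (k-i))^t
          ≤ ∑ i ∈ range k, (θ^t)^i * (B (k-i))^t := by
        intro k
        refine le_trans (rpow_sum_le_sum_rpow (range k) _ ht ht1.le) ?_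
        refine Finset.sum_le_sum fun i _ => ?_
        rw [ENNReal.mul_rpow_of_nonneg _ _ ht.le, geom_pow_rpow]
      rw [lqNat, if_neg hqi, lqNat, if_neg hqi]
      calc (∑' k, (∑ i ∈ range k, θ^i * B (k-i))^t)^(1/t)
          ≤ (∑' k, ∑ i ∈ range k, (θ^t)^i * (B (k-i))^t)^(1/t) :=
            ENNReal.rpow_le_rpow (ENNReal.tsum_le_tsum key) (by positivity)
        _ ≤ ((∑' n, (θ^t)^n) * ∑' n, (B n)^t)^(1/t) :=
            ENNReal.rpow_le_rpow (tsum_conv_le _ _) (by positivity)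
        _ = ((1 - θ^t)⁻¹)^(1/t) * (∑' n, (B n)^t)^(1/t) := by
            rw [ENNReal.tsum_geometric, ENNReal.mul_rpow_of_nonneg _ _ (by positivity)]

lemma recur_bound (q θ c : ℝ≥0∞) (hq : q ≠ 0) (hθ1 : θ < 1) (hc : c ≠ ∞) :
    ∃ K : ℝ≥0∞, K ≠ ∞ ∧ ∀ A B : ℕ → ℝ≥0∞, (∀ k, A (k+1) ≤ θ * A k + c * B (k+1)) →
      lqNat q A ≤ K * (A 0 + lqNat q B) := by
  obtain ⟨G, hGt, hG⟩ := lqNat_geom_le q θ hq hθ1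
  obtain ⟨Cv, hCt, hC⟩ := lqNat_conv_le q θ hq hθ1
  refine ⟨KqC q * (G + c * Cv), ENNReal.mul_ne_top (KqC_ne_top q)
    (ENNReal.add_ne_top.mpr ⟨hGt, ENNReal.mul_ne_top hc hCt⟩), fun A B hrec => ?_⟩
  have closed : ∀ k, A k ≤ θ^k * A 0 + c * ∑ i ∈ Finset.range k, θ^i * B (k-i) := by
    intro k
    induction k with
    | zero => simp
    | succ k IH =>
      have heq : θ^(k+1) * A 0 + c * ∑ i ∈ range (k+1), θ^i * B (k+1-i)
          = θ * (θ^k * A 0 + c * ∑ i ∈ range k, θ^i * B (k-i)) + c * B (k+1) := by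
        rw [Finset.sum_range_succ' (fun i => θ^i * B (k+1-i)) k]
        simp only [pow_zero, one_mul, Nat.sub_zero, Nat.succ_sub_succ_eq_sub]
        have hsum : θ * ∑ i ∈ range k, θ^i * B (k-i) = ∑ i ∈ range k, θ^(i+1) * B (k-i) := by
          rw [Finset.mul_sum]
          exact Finset.sum_congr rfl fun i _ => by ring
        rw [mul_add, mul_add, mul_left_comm θ c, hsum, ← mul_assoc, ← pow_succ']
        ring
      calc A (k+1) ≤ θ * A k + c * B (k+1) := hrec k
        _ ≤ θ * (θ^k * A 0 + c * ∑ i ∈ range k, θ^i * B (k-i)) + c * B (k+1) := by gcongr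
        _ = θ^(k+1) * A 0 + c * ∑ i ∈ range (k+1), θ^i * B (k+1-i) := heq.symm
  calc lqNat q A
      ≤ lqNat q (fun k => θ^k * A 0 + c * ∑ i ∈ Finset.range k, θ^i * B (k-i)) :=
        lqNat_mono q closed
    _ ≤ KqC q * (lqNat q (fun k => θ^k * A 0)
          + lqNat q (fun k => c * ∑ i ∈ Finset.range k, θ^i * B (k-i))) :=
        lqNat_add_le hq _ _
    _ = KqC q * (A 0 * lqNat q (fun k => θ^k)
          + c * lqNat q (fun k => ∑ i ∈ Finset.range k, θ^i * B (k-i))) := by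
        congr 2
        · have : (fun k => θ^k * A 0) = fun k => A 0 * θ^k := by
            funext k; ring
          rw [this, lqNat_const_mul hq]
        · rw [lqNat_const_mul hq]
    _ ≤ KqC q * (A 0 * G + c * (Cv * lqNat q B)) :=
        mul_le_mul_right (add_le_add (mul_le_mul_right hG (A 0))
          (mul_le_mul_right (hC B) c)) _
    _ ≤ KqC q * ((G + c * Cv) * (A 0 + lqNat q B)) := by
        refine mul_le_mul_right ?_ _
        calc A 0 * G + c * (Cv * lqNat q B)
            ≤ (G + c * Cv) * A 0 + (G + c * Cv) * lqNat q B := by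
              refine add_le_add ?_ ?_
              · rw [mul_comm]
                exact mul_le_mul_left (le_add_right le_rfl) (A 0)
              · rw [← mul_assoc]
                exact mul_le_mul_left (le_add_left le_rfl) _
          _ = (G + c * Cv) * (A 0 + lqNat q B) := by rw [mul_add]
    _ = KqC q * (G + c * Cv) * (A 0 + lqNat q B) := by rw [mul_assoc]

end Aux5

section Aux6
open Finset

lemma two_rpow_ne_top (x : ℝ) : (2:ℝ≥0∞)^x ≠ ∞ := by
  intro htop
  have := ENNReal.rpow_eq_top_iff.mp htop
  rcases this with ⟨_, _⟩ | ⟨h2, _⟩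
  · simp_all
  · exact (by norm_num : (2:ℝ≥0∞) ≠ ⊤) h2

lemma two_rpow_add (x y : ℝ) : (2:ℝ≥0∞)^(x+y) = (2:ℝ≥0∞)^x * (2:ℝ≥0∞)^y :=
  ENNReal.rpow_add x y (by norm_num) (by norm_num)

lemma two_rpow_mono {x y : ℝ} (hxy : x ≤ y) : (2:ℝ≥0∞)^x ≤ (2:ℝ≥0∞)^y :=
  ENNReal.rpow_le_rpow_of_exponent_le one_le_two hxy

lemma tk_pos (k : ℕ) : (0:ℝ) < (2:ℝ)^(-(k:ℝ)) := Real.rpow_pos_of_pos two_pos _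

lemma two_mul_tk (k : ℕ) : (2:ℝ) * (2:ℝ)^(-((k+1:ℕ):ℝ)) = (2:ℝ)^(-(k:ℝ)) := by
  have h2 : (2:ℝ) = (2:ℝ)^(1:ℝ) := (Real.rpow_one 2).symm
  calc (2:ℝ) * (2:ℝ)^(-((k+1:ℕ):ℝ)) = (2:ℝ)^(1:ℝ) * (2:ℝ)^(-((k+1:ℕ):ℝ)) := by rw [← h2]
    _ = (2:ℝ)^(1 + -((k+1:ℕ):ℝ)) := (Real.rpow_add two_pos _ _).symm
    _ = (2:ℝ)^(-(k:ℝ)) := by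
        congr 1
        push_cast
        ring

lemma ladder (q : ℝ≥0∞) (hq : q ≠ 0) (m : ℕ) (s α : ℝ) (hα0 : 0 ≤ α) (hαs : α ≤ s) :
    ∀ i : ℕ, i ≤ m → (i < m → α < i) →
    ∃ K : ℝ≥0∞, K ≠ ∞ ∧ ∀ (d : ℕ) (f : Euc d → ℂ), AEStronglyMeasurable f volume →
      lqNat q (fun k => (2:ℝ≥0∞)^((k:ℝ)*α) * omegaMod i ∞ f ((2:ℝ)^(-(k:ℝ))))
        ≤ K * (eLpNorm f ∞ volume +
            lqNat q (fun k => (2:ℝ≥0∞)^((k:ℝ)*s) * omegaMod m ∞ f ((2:ℝ)^(-(k:ℝ))))) := by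
  suffices H : ∀ n : ℕ, ∀ i : ℕ, i ≤ m → m - i = n → (i < m → α < i) →
      ∃ K : ℝ≥0∞, K ≠ ∞ ∧ ∀ (d : ℕ) (f : Euc d → ℂ), AEStronglyMeasurable f volume →
      lqNat q (fun k => (2:ℝ≥0∞)^((k:ℝ)*α) * omegaMod i ∞ f ((2:ℝ)^(-(k:ℝ))))
        ≤ K * (eLpNorm f ∞ volume +
            lqNat q (fun k => (2:ℝ≥0∞)^((k:ℝ)*s) * omegaMod m ∞ f ((2:ℝ)^(-(k:ℝ))))) by
    intro i him hlt
    exact H (m - i) i him rfl hlt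
  intro n
  induction n with
  | zero =>
    intro i him hmi _
    have : i = m := by omega
    subst this
    refine ⟨1, one_ne_top, fun d f hf => ?_⟩
    rw [one_mul]
    refine le_trans (lqNat_mono q fun k => ?_) le_add_self
    exact mul_le_mul_left (two_rpow_mono
      (mul_le_mul_of_nonneg_left hαs (Nat.cast_nonneg k))) _
  | succ n IH =>
    intro i him hmi hlt
    have him' : i < m := by omega
    have hαi : α < (i:ℝ) := hlt him'
    obtain ⟨K', hKt', hK'⟩ := IH (i+1) (by omega) (by omega)
      (fun h => by push_cast; linarith)
    set θ : ℝ≥0∞ := (2:ℝ≥0∞)^(α - (i:ℝ)) with hθdef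
    have hθ1 : θ < 1 := by
      rw [hθdef]
      have := ENNReal.rpow_lt_rpow_of_exponent_lt (x := 2) one_lt_two (by norm_num)
        (by linarith : α - (i:ℝ) < 0)
      rwa [ENNReal.rpow_zero] at this
    obtain ⟨K, hKt, hK⟩ := recur_bound q θ (mcst i : ℝ≥0∞) hq hθ1 (natCast_ne_top _)
    refine ⟨K * ((2:ℝ≥0∞)^i + K'), ENNReal.mul_ne_top hKt
      (ENNReal.add_ne_top.mpr ⟨ENNReal.pow_ne_top (by norm_num), hKt'⟩), fun d f hf => ?_⟩
    set A : ℕ → ℝ≥0∞ := fun k => (2:ℝ≥0∞)^((k:ℝ)*α) * omegaMod i ∞ f ((2:ℝ)^(-(k:ℝ))) with hA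
    set B : ℕ → ℝ≥0∞ := fun k => (2:ℝ≥0∞)^((k:ℝ)*α) * omegaMod (i+1) ∞ f ((2:ℝ)^(-(k:ℝ))) with hB
    have hrec : ∀ k, A (k+1) ≤ θ * A k + (mcst i : ℝ≥0∞) * B (k+1) := by
      intro k
      have hM := omega_marchaud hf i (t := (2:ℝ)^(-((k+1:ℕ):ℝ)))
      rw [two_mul_tk k] at hM
      have hsplit : (2:ℝ≥0∞)^(((k+1:ℕ):ℝ)*α)
          = (2:ℝ≥0∞)^(α - (i:ℝ)) * (2:ℝ≥0∞)^((k:ℝ)*α) * (2:ℝ≥0∞)^((i:ℝ)) := by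
        rw [← two_rpow_add, ← two_rpow_add]
        congr 1
        push_cast
        ring
      have hnp : (2:ℝ≥0∞)^((i:ℝ)) = (2:ℝ≥0∞)^i := ENNReal.rpow_natCast 2 i
      calc A (k+1) = (2:ℝ≥0∞)^(α - (i:ℝ)) * (2:ℝ≥0∞)^((k:ℝ)*α)
            * ((2:ℝ≥0∞)^i * omegaMod i ∞ f ((2:ℝ)^(-((k+1:ℕ):ℝ)))) := by
            rw [hA]
            simp only []
            rw [hsplit, hnp]
            ring
        _ ≤ (2:ℝ≥0∞)^(α - (i:ℝ)) * (2:ℝ≥0∞)^((k:ℝ)*α)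
            * (omegaMod i ∞ f ((2:ℝ)^(-(k:ℝ)))
              + (mcst i : ℝ≥0∞) * omegaMod (i+1) ∞ f ((2:ℝ)^(-((k+1:ℕ):ℝ)))) :=
            mul_le_mul_right hM _
        _ = θ * A k + ((2:ℝ≥0∞)^(α - (i:ℝ)) * (2:ℝ≥0∞)^((k:ℝ)*α) * (mcst i : ℝ≥0∞))
            * omegaMod (i+1) ∞ f ((2:ℝ)^(-((k+1:ℕ):ℝ))) := by
            rw [hθdef, hA]
            ring
        _ ≤ θ * A k + (mcst i : ℝ≥0∞) * B (k+1) := by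
            refine add_le_add le_rfl ?_
            rw [hB]
            have hexp : (2:ℝ≥0∞)^(α - (i:ℝ)) * (2:ℝ≥0∞)^((k:ℝ)*α)
                ≤ (2:ℝ≥0∞)^(((k+1:ℕ):ℝ)*α) := by
              rw [← two_rpow_add]
              refine two_rpow_mono ?_
              push_cast
              nlinarith [hα0, hαi, Nat.cast_nonneg (α := ℝ) i]
            calc (2:ℝ≥0∞)^(α - (i:ℝ)) * (2:ℝ≥0∞)^((k:ℝ)*α) * (mcst i : ℝ≥0∞)
                * omegaMod (i+1) ∞ f ((2:ℝ)^(-((k+1:ℕ):ℝ)))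
                ≤ (2:ℝ≥0∞)^(((k+1:ℕ):ℝ)*α) * (mcst i : ℝ≥0∞)
                  * omegaMod (i+1) ∞ f ((2:ℝ)^(-((k+1:ℕ):ℝ))) := by
                  exact mul_le_mul_left (mul_le_mul_left hexp _) _
              _ = (mcst i : ℝ≥0∞) * ((2:ℝ≥0∞)^(((k+1:ℕ):ℝ)*α)
                  * omegaMod (i+1) ∞ f ((2:ℝ)^(-((k+1:ℕ):ℝ)))) := by ring
    have hmain := hK A B hrec
    have hA0 : A 0 ≤ (2:ℝ≥0∞)^i * eLpNorm f ∞ volume := by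
      rw [hA]
      simp only [Nat.cast_zero, zero_mul, ENNReal.rpow_zero, one_mul]
      exact omega_le_pow hf i _
    have hBb : lqNat q B ≤ K' * (eLpNorm f ∞ volume +
        lqNat q (fun k => (2:ℝ≥0∞)^((k:ℝ)*s) * omegaMod m ∞ f ((2:ℝ)^(-(k:ℝ))))) :=
      hK' d f hf
    set P := eLpNorm f ∞ volume +
        lqNat q (fun k => (2:ℝ≥0∞)^((k:ℝ)*s) * omegaMod m ∞ f ((2:ℝ)^(-(k:ℝ)))) with hP
    calc lqNat q A ≤ K * (A 0 + lqNat q B) := hmain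
      _ ≤ K * ((2:ℝ≥0∞)^i * eLpNorm f ∞ volume + K' * P) := by
          exact mul_le_mul_right (add_le_add hA0 hBb) _
      _ ≤ K * ((2:ℝ≥0∞)^i * P + K' * P) := by
          refine mul_le_mul_right (add_le_add (mul_le_mul_right ?_ _) le_rfl) _
          rw [hP]
          exact le_self_add
      _ = K * ((2:ℝ≥0∞)^i + K') * P := by ring

end Aux6

section Aux7
open Finset

lemma besov_mul_bound (d : ℕ) (q : ℝ≥0∞) (s : ℝ) (m : ℕ) (hq : q ≠ 0) (hs : 0 < s)
    (hm : s < m) :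
    ∃ K : ℝ≥0∞, K ≠ ∞ ∧ ∀ f g : Euc d → ℂ, AEStronglyMeasurable f volume →
      AEStronglyMeasurable g volume →
      besovNorm d s ∞ q m (fun x => f x * g x)
        ≤ K * (besovNorm d s ∞ q m f * besovNorm d s ∞ q m g) := by
  have hm0 : 0 < m := by
    rcases Nat.eq_zero_or_pos m with rfl | h
    · simp only [Nat.cast_zero] at hm; linarith
    · exact h
  have hmR : (0:ℝ) < m := by exact_mod_cast hm0
  have hterm : ∀ j : ℕ, ∃ Kj : ℝ≥0∞, Kj ≠ ∞ ∧ (j ≤ m →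
      ∀ f g : Euc d → ℂ, AEStronglyMeasurable f volume → AEStronglyMeasurable g volume →
      lqNat q (fun k => (2:ℝ≥0∞)^((k:ℝ)*s) *
          (omegaMod j ∞ f ((2:ℝ)^(-(k:ℝ))) * omegaMod (m-j) ∞ g ((2:ℝ)^(-(k:ℝ)))))
        ≤ Kj * ((eLpNorm f ∞ volume +
            lqNat q (fun k => (2:ℝ≥0∞)^((k:ℝ)*s) * omegaMod m ∞ f ((2:ℝ)^(-(k:ℝ)))))
          * (eLpNorm g ∞ volume +
            lqNat q (fun k => (2:ℝ≥0∞)^((k:ℝ)*s) * omegaMod m ∞ g ((2:ℝ)^(-(k:ℝ))))))) := by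
    intro j
    rcases Nat.eq_zero_or_pos j with rfl | hj0
    · -- j = 0
      refine ⟨1, one_ne_top, fun _ f g hf hg => ?_⟩
      have heq : (fun (k:ℕ) => (2:ℝ≥0∞)^((k:ℝ)*s) *
          (omegaMod 0 ∞ f ((2:ℝ)^(-(k:ℝ))) * omegaMod (m-0) ∞ g ((2:ℝ)^(-(k:ℝ)))))
          = fun (k:ℕ) => eLpNorm f ∞ volume *
            ((2:ℝ≥0∞)^((k:ℝ)*s) * omegaMod m ∞ g ((2:ℝ)^(-(k:ℝ)))) := by
        funext k
        rw [omega_zero_order f (tk_pos k), Nat.sub_zero]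
        ring
      rw [heq, lqNat_const_mul hq, one_mul]
      exact mul_le_mul' le_self_add le_add_self
    rcases lt_trichotomy j m with hjm | hjm | hjm
    · -- 0 < j < m : interpolation case
      have hjR : (0:ℝ) < j := by exact_mod_cast hj0
      have hjmR : (j:ℝ) < m := by exact_mod_cast hjm
      set α : ℝ := s * j / m with hαdef
      set β : ℝ := s * ((m:ℝ) - j) / m with hβdef
      have hα0 : 0 ≤ α := by positivity
      have hβ0 : 0 ≤ β := by
        have : (0:ℝ) ≤ (m:ℝ) - j := by linarith
        positivity
      have hαs : α ≤ s := by
        rw [hαdef, div_le_iff₀ hmR]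
        nlinarith
      have hβs : β ≤ s := by
        rw [hβdef, div_le_iff₀ hmR]
        nlinarith
      have hαj : α < (j:ℝ) := by
        rw [hαdef, div_lt_iff₀ hmR]
        nlinarith
      have hβj : β < ((m-j:ℕ):ℝ) := by
        rw [Nat.cast_sub hjm.le, hβdef, div_lt_iff₀ hmR]
        nlinarith
      have hab : ∀ k : ℕ, ((k:ℝ))*α + ((k:ℝ))*β = ((k:ℝ))*s := by
        intro k
        rw [hαdef, hβdef]
        field_simp
        ring
      obtain ⟨Kf, hKft, hKf⟩ := ladder ∞ (by simp) m s α hα0 hαs j hjm.le (fun _ => hαj)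
      obtain ⟨Kg, hKgt, hKg⟩ := ladder q hq m s β hβ0 hβs (m-j) (Nat.sub_le m j)
        (fun _ => hβj)
      refine ⟨Kf * Kg, ENNReal.mul_ne_top hKft hKgt, fun _ f g hf hg => ?_⟩
      have hsplit : (fun (k:ℕ) => (2:ℝ≥0∞)^((k:ℝ)*s) *
          (omegaMod j ∞ f ((2:ℝ)^(-(k:ℝ))) * omegaMod (m-j) ∞ g ((2:ℝ)^(-(k:ℝ)))))
          = fun (k:ℕ) => ((2:ℝ≥0∞)^((k:ℝ)*α) * omegaMod j ∞ f ((2:ℝ)^(-(k:ℝ))))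
            * ((2:ℝ≥0∞)^((k:ℝ)*β) * omegaMod (m-j) ∞ g ((2:ℝ)^(-(k:ℝ)))) := by
        funext k
        rw [← hab k, two_rpow_add]
        ring
      rw [hsplit]
      set U : ℕ → ℝ≥0∞ := fun k => (2:ℝ≥0∞)^((k:ℝ)*α) * omegaMod j ∞ f ((2:ℝ)^(-(k:ℝ)))
        with hU
      set V : ℕ → ℝ≥0∞ := fun k => (2:ℝ≥0∞)^((k:ℝ)*β) * omegaMod (m-j) ∞ g ((2:ℝ)^(-(k:ℝ)))
        with hV
      have hUsup : ∀ k, U k ≤ ⨆ k', U k' := fun k => le_iSup U k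
      calc lqNat q (fun k => U k * V k)
          ≤ lqNat q (fun k => (⨆ k', U k') * V k) :=
            lqNat_mono q fun k => mul_le_mul_left (hUsup k) _
        _ = (⨆ k', U k') * lqNat q V := lqNat_const_mul hq _ _
        _ ≤ (Kf * (eLpNorm f ∞ volume +
              lqNat q (fun k => (2:ℝ≥0∞)^((k:ℝ)*s) * omegaMod m ∞ f ((2:ℝ)^(-(k:ℝ))))))
            * (Kg * (eLpNorm g ∞ volume +
              lqNat q (fun k => (2:ℝ≥0∞)^((k:ℝ)*s) * omegaMod m ∞ g ((2:ℝ)^(-(k:ℝ)))))) := by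
            refine mul_le_mul' ?_ (hKg d g hg)
            have h1 := hKf d f hf
            rw [lqNat, if_pos rfl] at h1
            refine le_trans h1 ?_
            refine mul_le_mul_right (add_le_add le_rfl ?_) Kf
            rw [lqNat, if_pos rfl]
            exact iSup_le fun k => le_lqNat hq _ k
        _ = Kf * Kg * ((eLpNorm f ∞ volume +
              lqNat q (fun k => (2:ℝ≥0∞)^((k:ℝ)*s) * omegaMod m ∞ f ((2:ℝ)^(-(k:ℝ)))))
            * (eLpNorm g ∞ volume +
              lqNat q (fun k => (2:ℝ≥0∞)^((k:ℝ)*s) * omegaMod m ∞ g ((2:ℝ)^(-(k:ℝ)))))) := by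
            ring
    · -- j = m
      subst hjm
      refine ⟨1, one_ne_top, fun _ f g hf hg => ?_⟩
      have heq : (fun (k:ℕ) => (2:ℝ≥0∞)^((k:ℝ)*s) *
          (omegaMod j ∞ f ((2:ℝ)^(-(k:ℝ))) * omegaMod (j-j) ∞ g ((2:ℝ)^(-(k:ℝ)))))
          = fun (k:ℕ) => eLpNorm g ∞ volume *
            ((2:ℝ≥0∞)^((k:ℝ)*s) * omegaMod j ∞ f ((2:ℝ)^(-(k:ℝ)))) := by
        funext k
        rw [Nat.sub_self, omega_zero_order g (tk_pos k)]
        ring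
      rw [heq, lqNat_const_mul hq, one_mul]
      calc eLpNorm g ∞ volume *
            lqNat q (fun k => (2:ℝ≥0∞)^((k:ℝ)*s) * omegaMod j ∞ f ((2:ℝ)^(-(k:ℝ))))
          ≤ (eLpNorm g ∞ volume +
              lqNat q (fun k => (2:ℝ≥0∞)^((k:ℝ)*s) * omegaMod j ∞ g ((2:ℝ)^(-(k:ℝ)))))
            * (eLpNorm f ∞ volume +
              lqNat q (fun k => (2:ℝ≥0∞)^((k:ℝ)*s) * omegaMod j ∞ f ((2:ℝ)^(-(k:ℝ))))) :=
            mul_le_mul' le_self_add le_add_self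
        _ = _ := mul_comm _ _
    · -- j > m : vacuous
      exact ⟨1, one_ne_top, fun hle => absurd hle (by omega)⟩
  choose Kfun hKfun using hterm
  refine ⟨1 + (KqC q)^(m+1) * ∑ j ∈ range (m+1), (m.choose j : ℝ≥0∞) * Kfun j, ?_, ?_⟩
  · refine ENNReal.add_ne_top.mpr ⟨one_ne_top, ENNReal.mul_ne_top
      (ENNReal.pow_ne_top (KqC_ne_top q)) ?_⟩
    exact (ENNReal.sum_lt_top.mpr fun j _ => ENNReal.mul_lt_top
      (natCast_ne_top _).lt_top (hKfun j).1.lt_top).ne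
  · intro f g hf hg
    rw [besovNorm, besovNorm, besovNorm]
    set Nf := eLpNorm f ∞ volume
    set Ng := eLpNorm g ∞ volume
    set Lf := lqNat q (fun k => (2:ℝ≥0∞)^((k:ℝ)*s) * omegaMod m ∞ f ((2:ℝ)^(-(k:ℝ)))) with hLf
    set Lg := lqNat q (fun k => (2:ℝ≥0∞)^((k:ℝ)*s) * omegaMod m ∞ g ((2:ℝ)^(-(k:ℝ)))) with hLg
    have hNfg : eLpNorm (fun x => f x * g x) ∞ volume ≤ (Nf + Lf) * (Ng + Lg) :=
      le_trans (eLpNormTop_mul_le f g) (mul_le_mul' le_self_add le_self_add)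
    have hLfg : lqNat q (fun k => (2:ℝ≥0∞)^((k:ℝ)*s) *
          omegaMod m ∞ (fun x => f x * g x) ((2:ℝ)^(-(k:ℝ))))
        ≤ (KqC q)^(m+1) * (∑ j ∈ range (m+1), (m.choose j : ℝ≥0∞) * Kfun j)
          * ((Nf + Lf) * (Ng + Lg)) := by
      have hmono : ∀ k : ℕ, (2:ℝ≥0∞)^((k:ℝ)*s) *
          omegaMod m ∞ (fun x => f x * g x) ((2:ℝ)^(-(k:ℝ)))
          ≤ ∑ j ∈ range (m+1), (m.choose j : ℝ≥0∞) * ((2:ℝ≥0∞)^((k:ℝ)*s) *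
            (omegaMod j ∞ f ((2:ℝ)^(-(k:ℝ))) * omegaMod (m-j) ∞ g ((2:ℝ)^(-(k:ℝ))))) := by
        intro k
        calc (2:ℝ≥0∞)^((k:ℝ)*s) * omegaMod m ∞ (fun x => f x * g x) ((2:ℝ)^(-(k:ℝ)))
            ≤ (2:ℝ≥0∞)^((k:ℝ)*s) * ∑ j ∈ range (m+1), (m.choose j : ℝ≥0∞) *
              (omegaMod j ∞ f ((2:ℝ)^(-(k:ℝ))) * omegaMod (m-j) ∞ g ((2:ℝ)^(-(k:ℝ)))) :=
              mul_le_mul_right (omega_leibniz hf hg m _) _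
          _ = _ := by
              rw [Finset.mul_sum]
              exact Finset.sum_congr rfl fun j _ => by ring
      calc lqNat q (fun k => (2:ℝ≥0∞)^((k:ℝ)*s) *
            omegaMod m ∞ (fun x => f x * g x) ((2:ℝ)^(-(k:ℝ))))
          ≤ lqNat q (fun k => ∑ j ∈ range (m+1), (m.choose j : ℝ≥0∞) *
              ((2:ℝ≥0∞)^((k:ℝ)*s) *
              (omegaMod j ∞ f ((2:ℝ)^(-(k:ℝ))) * omegaMod (m-j) ∞ g ((2:ℝ)^(-(k:ℝ)))))) :=
            lqNat_mono q hmono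
        _ ≤ (KqC q)^(m+1) * ∑ j ∈ range (m+1), lqNat q (fun k => (m.choose j : ℝ≥0∞) *
              ((2:ℝ≥0∞)^((k:ℝ)*s) *
              (omegaMod j ∞ f ((2:ℝ)^(-(k:ℝ))) * omegaMod (m-j) ∞ g ((2:ℝ)^(-(k:ℝ)))))) :=
            lqNat_sum_le hq (m+1) _
        _ ≤ (KqC q)^(m+1) * ∑ j ∈ range (m+1), (m.choose j : ℝ≥0∞) *
              (Kfun j * ((Nf + Lf) * (Ng + Lg))) := by
            refine mul_le_mul_right (Finset.sum_le_sum fun j hj => ?_) _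
            rw [lqNat_const_mul hq]
            refine mul_le_mul_right ?_ _
            exact (hKfun j).2 (by simpa using Nat.lt_succ_iff.mp (mem_range.mp hj)) f g hf hg
        _ = (KqC q)^(m+1) * (∑ j ∈ range (m+1), (m.choose j : ℝ≥0∞) * Kfun j)
              * ((Nf + Lf) * (Ng + Lg)) := by
            rw [mul_assoc]
            congr 1
            rw [Finset.sum_mul]
            exact Finset.sum_congr rfl fun j _ => by ring
    calc eLpNorm (fun x => f x * g x) ∞ volume +
          lqNat q (fun k => (2:ℝ≥0∞)^((k:ℝ)*s) *
            omegaMod m ∞ (fun x => f x * g x) ((2:ℝ)^(-(k:ℝ))))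
        ≤ (Nf + Lf) * (Ng + Lg) + (KqC q)^(m+1) *
            (∑ j ∈ range (m+1), (m.choose j : ℝ≥0∞) * Kfun j) * ((Nf + Lf) * (Ng + Lg)) :=
          add_le_add hNfg hLfg
      _ = (1 + (KqC q)^(m+1) * ∑ j ∈ range (m+1), (m.choose j : ℝ≥0∞) * Kfun j)
            * ((Nf + Lf) * (Ng + Lg)) := by ring

end Aux7

section Aux8
open Finset fwdDiff

variable {d : ℕ}

lemma fwdDiff_iter_zero_fun (h : Euc d) (n : ℕ) :
    (fwdDiff h)^[n] (fun _ => (0:ℂ)) = fun _ => 0 := by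
  induction n with
  | zero => rfl
  | succ n IH =>
    rw [Function.iterate_succ_apply]
    have : fwdDiff h (fun _ => (0:ℂ)) = fun _ => (0:ℂ) := by
      funext y; simp [fwdDiff]
    rw [this, IH]

lemma omega_const_zero {m : ℕ} (hm : 0 < m) (t : ℝ) :
    omegaMod m ∞ (fun _ : Euc d => (1:ℂ)) t = 0 := by
  refine le_antisymm (omega_le fun h _ => ?_) zero_le'
  obtain ⟨n, rfl⟩ : ∃ n, m = n + 1 := ⟨m - 1, by omega⟩
  rw [fdiff_fun_eq]
  have h2 : (fwdDiff h)^[n+1] (fun _ : Euc d => (1:ℂ)) = fun _ => 0 := by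
    rw [Function.iterate_succ_apply]
    have : fwdDiff h (fun _ : Euc d => (1:ℂ)) = fun _ => (0:ℂ) := by
      funext y; simp [fwdDiff]
    rw [this, fwdDiff_iter_zero_fun]
  rw [h2]
  exact le_of_eq eLpNorm_zero'

lemma besov_one (q : ℝ≥0∞) (hq : q ≠ 0) (s : ℝ) {m : ℕ} (hm : 0 < m) :
    besovNorm d s ∞ q m (fun _ => (1:ℂ)) = 1 := by
  rw [besovNorm]
  have h1 : eLpNorm (fun _ : Euc d => (1:ℂ)) ∞ volume = 1 := by
    rw [eLpNorm_exponent_top, eLpNormEssSup_const _ (NeZero.ne (volume : Measure (Euc d)))]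
    simp
  have h2 : (fun k : ℕ => (2:ℝ≥0∞)^((k:ℝ)*s) *
      omegaMod m ∞ (fun _ : Euc d => (1:ℂ)) ((2:ℝ)^(-(k:ℝ)))) = fun _ => 0 := by
    funext k
    rw [omega_const_zero hm]
    simp
  rw [h1, h2, lqNat_zero q hq, add_zero]

end Aux8
/-- for `s > 0` and `0 < q ≤ ∞`,
`M(B^s_{∞,q}(ℝ^d)) = B^s_{∞,q}(ℝ^d)` with equivalent quasi-norms. -/
theorem statement3 (d : ℕ) (hd : 1 ≤ d) (q : ℝ≥0∞) (s : ℝ)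
    (hq : 0 < q) (hs : 0 < s)
    (m : ℕ) (hm : s < m) :
    (∀ f : Euc d → ℂ, MemMult d s ∞ q m f ↔ MemBesov d s ∞ q m f) ∧
    ∃ C₁ C₂ : ℝ≥0,
      (∀ f : Euc d → ℂ, MemMult d s ∞ q m f →
        besovNorm d s ∞ q m f ≤ C₁ * multNorm d s ∞ q m f) ∧
      (∀ f : Euc d → ℂ, MemBesov d s ∞ q m f →
        multNorm d s ∞ q m f ≤ C₂ * besovNorm d s ∞ q m f) := by
  have hq0 : q ≠ 0 := hq.ne'
  have hm0 : 0 < m := by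
    rcases Nat.eq_zero_or_pos m with rfl | h
    · simp only [Nat.cast_zero] at hm; linarith
    · exact h
  obtain ⟨K, hKt, hK⟩ := besov_mul_bound d q s m hq0 hs hm
  have hone : MemBesov d s ∞ q m (fun _ => (1:ℂ)) := by
    refine ⟨aestronglyMeasurable_const, ?_⟩
    rw [besov_one q hq0 s hm0]
    exact one_lt_top
  have hmul_one : ∀ f : Euc d → ℂ, (fun x => f x * (1:ℂ)) = f :=
    fun f => funext fun x => mul_one _
  constructor
  · intro f
    constructor
    · intro hM
      have h1 := hM _ hone
      rwa [hmul_one f] at h1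
    · intro hB g hg
      refine ⟨hB.1.mul hg.1, ?_⟩
      calc besovNorm d s ∞ q m (fun x => f x * g x)
          ≤ K * (besovNorm d s ∞ q m f * besovNorm d s ∞ q m g) := hK f g hB.1 hg.1
        _ < ∞ := ENNReal.mul_lt_top hKt.lt_top (ENNReal.mul_lt_top hB.2 hg.2)
  · refine ⟨1, K.toNNReal, ?_, ?_⟩
    · intro f _
      have hle : besovNorm d s ∞ q m f ≤ multNorm d s ∞ q m f := by
        have h2 := le_iSup₂ (f := fun (g : Euc d → ℂ)
          (_ : MemBesov d s ∞ q m g ∧ besovNorm d s ∞ q m g ≤ 1) =>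
            besovNorm d s ∞ q m fun x => f x * g x)
          (fun _ => (1:ℂ)) ⟨hone, le_of_eq (besov_one q hq0 s hm0)⟩
        rw [multNorm]
        refine le_trans (le_of_eq ?_) h2
        rw [hmul_one f]
      calc besovNorm d s ∞ q m f ≤ multNorm d s ∞ q m f := hle
        _ = ((1:ℝ≥0) : ℝ≥0∞) * multNorm d s ∞ q m f := by rw [ENNReal.coe_one, one_mul]
    · intro f hB
      rw [multNorm]
      refine iSup₂_le fun g hg => ?_
      obtain ⟨hgB, hg1⟩ := hg
      calc besovNorm d s ∞ q m (fun x => f x * g x)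
          ≤ K * (besovNorm d s ∞ q m f * besovNorm d s ∞ q m g) := hK f g hB.1 hgB.1
        _ ≤ K * (besovNorm d s ∞ q m f * 1) := by gcongr
        _ = K * besovNorm d s ∞ q m f := by rw [mul_one]
        _ = (K.toNNReal : ℝ≥0∞) * besovNorm d s ∞ q m f := by
            rw [ENNReal.coe_toNNReal hKt]
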